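/- arXiv:1307.7504 — 5 statements merged into one kernel-verified Lean document; each statement's English description precedes it below -/
import Mathlib

section
/- Let Δ ⊆ ℝ^d be a compact set and let g_1, …, g_s : ℝ^d → ℝ^d be C¹ diffeomorphisms with g_i(Δ) = Δ for all i, such that the action semigroup generated by g_1, …, g_s is minimal on Δ (every nonempty closed subset K ⊆ Δ with g_i(K) ⊆ K for all i equals Δ). If B ⊆ Δ is a Lebesgue measurable set with g_i(B) = B for all i and vol(B) > 0, then the set of Lebesgue density points of B is dense in Δ. -/
open MeasureTheory Filter Set

/-- Let `Δ ⊆ ℝ^d` be compact and invariant under `C¹` diffeomorphisms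
`g 1, …, g s` whose action semigroup is minimal on `Δ`.  If `B ⊆ Δ` is measurable,
invariant under every `g i`, and of positive volume, then the set of Lebesgue density
points of `B` is dense in `Δ`. -/
theorem stmt_1 {d s : ℕ}
    (Δ : Set (EuclideanSpace ℝ (Fin d))) (hΔ : IsCompact Δ)
    (g : Fin s → (EuclideanSpace ℝ (Fin d)) ≃ₜ (EuclideanSpace ℝ (Fin d)))
    (hg : ∀ i, ContDiff ℝ 1 (g i)) (hg' : ∀ i, ContDiff ℝ 1 (g i).symm)
    (hginv : ∀ i, g i '' Δ = Δ)
    (hmin : ∀ K : Set (EuclideanSpace ℝ (Fin d)),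
      K ⊆ Δ → IsClosed K → K.Nonempty → (∀ i, g i '' K ⊆ K) → K = Δ)
    (B : Set (EuclideanSpace ℝ (Fin d))) (hBmeas : MeasurableSet B) (hBΔ : B ⊆ Δ)
    (hBinv : ∀ i, g i '' B = B) (hBpos : 0 < volume B) :
    Δ ⊆ closure {x : EuclideanSpace ℝ (Fin d) |
      Tendsto (fun r : ℝ => volume (B ∩ Metric.ball x r) / volume (Metric.ball x r))
        (nhdsWithin 0 (Ioi 0)) (nhds 1)} := by
  set D : Set (EuclideanSpace ℝ (Fin d)) := {x : EuclideanSpace ℝ (Fin d) |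
      Tendsto (fun r : ℝ => volume (B ∩ Metric.ball x r) / volume (Metric.ball x r))
        (nhdsWithin 0 (Ioi 0)) (nhds 1)} with hD
  -- Almost every point of `B` is a Lebesgue density point of `B`.
  have hdens : ∀ᵐ x ∂(volume : Measure (EuclideanSpace ℝ (Fin d))), x ∈ B → x ∈ D := by
    filter_upwards [Besicovitch.ae_tendsto_measure_inter_div_of_measurableSet
      (volume : Measure (EuclideanSpace ℝ (Fin d))) hBmeas] with x hx hxB
    rw [Set.indicator_of_mem hxB] at hx
    refine Tendsto.congr' ?_ hx
    filter_upwards [self_mem_nhdsWithin] with r hr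
    have hr' : (0 : ℝ) < r := hr
    have hs : volume (Metric.sphere x r) = 0 :=
      Measure.addHaar_sphere_of_ne_zero volume x hr'.ne'
    have key : ∀ A N : Set (EuclideanSpace ℝ (Fin d)), volume N = 0 →
        volume (A ∪ N) = volume A := fun A N hN =>
      le_antisymm (by simpa [hN] using measure_union_le (μ := (volume : Measure (EuclideanSpace ℝ (Fin d)))) A N)
        (measure_mono Set.subset_union_left)
    have e1 : volume (Metric.closedBall x r) = volume (Metric.ball x r) := by
      rw [← Metric.ball_union_sphere]; exact key _ _ hs
    have e2 : volume (B ∩ Metric.closedBall x r) = volume (B ∩ Metric.ball x r) := by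
      rw [← Metric.ball_union_sphere, Set.inter_union_distrib_left]
      exact key _ _ (measure_mono_null Set.inter_subset_right hs)
    simp only [e1, e2, Pi.one_apply]
  -- The "measure-theoretic support" of `B`.
  set S : Set (EuclideanSpace ℝ (Fin d)) := {x : EuclideanSpace ℝ (Fin d) | ∀ r : ℝ, 0 < r → 0 < volume (B ∩ Metric.ball x r)} with hS
  have hSΔ : S ⊆ Δ := by
    intro x hx
    have hxcl : x ∈ closure B := by
      rw [Metric.mem_closure_iff]
      intro ε hε
      obtain ⟨y, hyB, hy⟩ := nonempty_of_measure_ne_zero (hx ε hε).ne'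
      exact ⟨y, hyB, by simpa [dist_comm] using hy⟩
    exact closure_minimal hBΔ hΔ.isClosed hxcl
  have hSclosed : IsClosed S := by
    rw [← isOpen_compl_iff, Metric.isOpen_iff]
    intro x hx
    simp only [hS, mem_compl_iff, mem_setOf_eq, not_forall] at hx
    obtain ⟨r, hr, hnull⟩ := hx
    have hnull' : volume (B ∩ Metric.ball x r) = 0 := by
      simpa using (not_lt.mp hnull).antisymm zero_le
    refine ⟨r / 2, by positivity, fun y hy => ?_⟩
    simp only [hS, mem_compl_iff, mem_setOf_eq, not_forall]
    refine ⟨r / 2, by positivity, by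
      rw [not_lt, nonpos_iff_eq_zero]
      refine measure_mono_null (Set.inter_subset_inter_right _ ?_) hnull'
      intro z hz
      calc dist z x ≤ dist z y + dist y x := dist_triangle z y x
        _ < r / 2 + r / 2 := add_lt_add hz hy
        _ = r := by ring⟩
  have hSne : S.Nonempty := by
    by_contra hemp
    rw [Set.not_nonempty_iff_eq_empty] at hemp
    have : volume B = 0 := by
      apply measure_null_of_locally_null
      intro x hxB
      have hx : x ∉ S := hemp ▸ Set.notMem_empty x
      simp only [hS, mem_setOf_eq, not_forall] at hx
      obtain ⟨r, hr, hnull⟩ := hx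
      have hnull' : volume (B ∩ Metric.ball x r) = 0 := by
        simpa using (not_lt.mp hnull).antisymm zero_le
      exact ⟨B ∩ Metric.ball x r,
        Filter.inter_mem self_mem_nhdsWithin
          (mem_nhdsWithin_of_mem_nhds (Metric.ball_mem_nhds x hr)), hnull'⟩
    exact absurd this hBpos.ne'
  have hSinv : ∀ i, g i '' S ⊆ S := by
    intro i y hy
    obtain ⟨x, hxS, rfl⟩ := hy
    intro r hr
    have hU : IsOpen ((g i) ⁻¹' (Metric.ball (g i x) r)) :=
      (Metric.isOpen_ball).preimage (g i).continuous
    obtain ⟨ε, hε, hball⟩ := Metric.isOpen_iff.mp hU x (by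
      simp [Metric.mem_ball, hr])
    have hsub : B ∩ Metric.ball x ε ⊆ (g i).symm '' (B ∩ Metric.ball (g i x) r) := by
      rintro z ⟨hzB, hzb⟩
      refine ⟨g i z, ⟨?_, hball hzb⟩, (g i).symm_apply_apply z⟩
      rw [← hBinv i]; exact Set.mem_image_of_mem _ hzB
    by_contra hnot
    have hnull : volume (B ∩ Metric.ball (g i x) r) = 0 := by
      simpa using (not_lt.mp hnot).antisymm zero_le
    have himg : volume ((g i).symm '' (B ∩ Metric.ball (g i x) r)) = 0 :=
      addHaar_image_eq_zero_of_differentiableOn_of_addHaar_eq_zero volume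
        (((hg' i).differentiable one_ne_zero).differentiableOn) hnull
    exact absurd (measure_mono_null hsub himg) (hxS ε hε).ne'
  have hSeq : S = Δ := hmin S hSΔ hSclosed hSne hSinv
  -- Conclude density of density points in Δ.
  intro x hxΔ
  have hxS : x ∈ S := hSeq ▸ hxΔ
  rw [Metric.mem_closure_iff]
  intro ε hε
  have hpos := hxS ε hε
  set T : Set (EuclideanSpace ℝ (Fin d)) := {z : EuclideanSpace ℝ (Fin d) | z ∈ B → z ∈ D} with hT
  have hTnull : volume Tᶜ = 0 := hdens
  have hne : ((B ∩ Metric.ball x ε) ∩ T).Nonempty := by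
    by_contra hcon
    rw [Set.not_nonempty_iff_eq_empty] at hcon
    have : B ∩ Metric.ball x ε ⊆ Tᶜ := by
      intro z hz
      intro hzT
      exact absurd (Set.mem_inter hz hzT) (hcon ▸ Set.notMem_empty z)
    exact absurd (measure_mono_null this hTnull) hpos.ne'
  obtain ⟨y, ⟨⟨hyB, hyb⟩, hyT⟩⟩ := hne
  exact ⟨y, hyT hyB, by simpa [dist_comm] using hyb⟩
end

section
/- Hutchinson attractor: let X be a nonempty complete metric space and let h_1, …, h_k : X → X be contractions (each Lipschitz with constant strictly less than 1). Then there exists a unique nonempty compact set Δ ⊆ X such that Δ = h_1(Δ) ∪ … ∪ h_k(Δ). In particular, every nonempty compact set K ⊆ X with K = h_1(K) ∪ … ∪ h_k(K) equals Δ. -/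
open Set

private lemma infEdist_image_le {X : Type*} [MetricSpace X] {f : X → X} {c : NNReal}
    (hf : LipschitzWith c f) (y : X) {t : Set X} (ht : IsCompact t) (htne : t.Nonempty) :
    EMetric.infEdist (f y) (f '' t) ≤ (c : ENNReal) * EMetric.infEdist y t := by
  obtain ⟨z, hz, hz'⟩ := ht.exists_infEdist_eq_edist htne y
  calc EMetric.infEdist (f y) (f '' t) ≤ edist (f y) (f z) :=
        EMetric.infEdist_le_edist_of_mem (mem_image_of_mem f hz)
    _ ≤ (c : ENNReal) * edist y z := hf y z
    _ = (c : ENNReal) * EMetric.infEdist y t := by rw [← hz']; rfl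

/-- Hutchinson attractor.  Contractions `h 1, …, h k` (`k ≥ 1`) of a nonempty
complete metric space admit a unique nonempty compact set `Δ` with
`Δ = h 1 '' Δ ∪ … ∪ h k '' Δ`. -/
theorem stmt_6 {X : Type*} [MetricSpace X] [CompleteSpace X] [Nonempty X] {k : ℕ}
    (hk : 0 < k) (h : Fin k → X → X) (ξ : Fin k → NNReal)
    (hξ : ∀ i, ξ i < 1) (hlip : ∀ i, LipschitzWith (ξ i) (h i)) :
    ∃! Δ : Set X, Δ.Nonempty ∧ IsCompact Δ ∧ Δ = ⋃ i, h i '' Δ := by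
  haveI : Nonempty (Fin k) := ⟨⟨0, hk⟩⟩
  set c : NNReal := Finset.univ.sup ξ with hc
  have hci : ∀ i, ξ i ≤ c := fun i => Finset.le_sup (Finset.mem_univ i)
  have hc1 : c < 1 := by
    rw [hc, Finset.sup_lt_iff (by norm_num : (⊥ : NNReal) < 1)]
    exact fun i _ => hξ i
  -- the Hutchinson operator on nonempty compacts
  let T : TopologicalSpace.NonemptyCompacts X → TopologicalSpace.NonemptyCompacts X :=
    fun K => ⟨⟨⋃ i, h i '' (K : Set X), isCompact_iUnion fun i =>
        K.isCompact.image (hlip i).continuous⟩,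
      ⟨h ⟨0, hk⟩ (K.nonempty.choose), mem_iUnion.2 ⟨⟨0, hk⟩,
        mem_image_of_mem _ K.nonempty.choose_spec⟩⟩⟩
  have hTlip : ContractingWith c T := by
    refine ⟨hc1, fun s t => ?_⟩
    show EMetric.hausdorffEdist (⋃ i, h i '' (s : Set X)) (⋃ i, h i '' (t : Set X))
        ≤ (c : ENNReal) * EMetric.hausdorffEdist (s : Set X) (t : Set X)
    apply EMetric.hausdorffEdist_le_of_infEdist
    · rintro x hx
      obtain ⟨i, y, hy, rfl⟩ := by simpa using hx
      calc EMetric.infEdist (h i y) (⋃ j, h j '' (t : Set X))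
          ≤ EMetric.infEdist (h i y) (h i '' (t : Set X)) :=
            EMetric.infEdist_anti (subset_iUnion (fun j => h j '' (t : Set X)) i)
        _ ≤ (ξ i : ENNReal) * EMetric.infEdist y (t : Set X) :=
            infEdist_image_le (hlip i) y t.isCompact t.nonempty
        _ ≤ (c : ENNReal) * EMetric.hausdorffEdist (s : Set X) (t : Set X) := by
            gcongr
            · exact hci i
            · exact EMetric.infEdist_le_hausdorffEdist_of_mem hy
    · rintro x hx
      obtain ⟨i, y, hy, rfl⟩ := by simpa using hx
      calc EMetric.infEdist (h i y) (⋃ j, h j '' (s : Set X))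
          ≤ EMetric.infEdist (h i y) (h i '' (s : Set X)) :=
            EMetric.infEdist_anti (subset_iUnion (fun j => h j '' (s : Set X)) i)
        _ ≤ (ξ i : ENNReal) * EMetric.infEdist y (s : Set X) :=
            infEdist_image_le (hlip i) y s.isCompact s.nonempty
        _ ≤ (c : ENNReal) * EMetric.hausdorffEdist (s : Set X) (t : Set X) := by
            rw [show EMetric.hausdorffEdist (s : Set X) (t : Set X) = EMetric.hausdorffEdist (t : Set X) (s : Set X) from EMetric.hausdorffEdist_comm]
            gcongr
            · exact hci i
            · exact EMetric.infEdist_le_hausdorffEdist_of_mem hy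
  haveI : Nonempty (TopologicalSpace.NonemptyCompacts X) :=
    ⟨⟨⟨{Classical.arbitrary X}, isCompact_singleton⟩, singleton_nonempty _⟩⟩
  obtain ⟨Δ, hΔfix⟩ : ∃ Δ, Function.IsFixedPt T Δ :=
    ⟨hTlip.fixedPoint T, hTlip.fixedPoint_isFixedPt⟩
  refine ⟨(Δ : Set X), ⟨Δ.nonempty, Δ.isCompact, ?_⟩, ?_⟩
  · conv_lhs => rw [← hΔfix]
    rfl
  · rintro S ⟨hSne, hScomp, hSfix⟩
    have : Function.IsFixedPt T ⟨⟨S, hScomp⟩, hSne⟩ := by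
      apply TopologicalSpace.NonemptyCompacts.ext
      exact hSfix.symm
    have := hTlip.fixedPoint_unique' this hΔfix
    exact congrArg (fun K : TopologicalSpace.NonemptyCompacts X => (K : Set X)) this
end

section
/- Let X be a nonempty complete metric space, let h_1, …, h_k : X → X be contractions, and let Δ be the Hutchinson attractor of the family. If K ⊆ X is a compact set satisfying K ⊆ h_1(K) ∪ … ∪ h_k(K), then K ⊆ Δ. In particular, if a nonempty open set V satisfies closure(V) ⊆ h_1(V) ∪ … ∪ h_k(V) and closure(V) is compact, then the attractor Δ has nonempty interior. -/
open Set

/-- if `Δ` is the Hutchinson attractor of contractions `h 1, …, h k` of a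
nonempty complete metric space, then every compact set `K` with `K ⊆ ⋃ i, h i '' K` is
contained in `Δ`; in particular, if a nonempty open set `V` with compact closure satisfies
`closure V ⊆ ⋃ i, h i '' V`, then `Δ` has nonempty interior. -/
theorem stmt_9 {X : Type*} [MetricSpace X] [CompleteSpace X] [Nonempty X] {k : ℕ}
    (h : Fin k → X → X) (ξ : Fin k → NNReal)
    (hξ : ∀ i, ξ i < 1) (hlip : ∀ i, LipschitzWith (ξ i) (h i))
    (Δ : Set X) (hΔne : Δ.Nonempty) (hΔc : IsCompact Δ)
    (hΔfix : Δ = ⋃ i, h i '' Δ) :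
    (∀ K : Set X, IsCompact K → K ⊆ ⋃ i, h i '' K → K ⊆ Δ) ∧
    (∀ V : Set X, IsOpen V → V.Nonempty → IsCompact (closure V) →
      closure V ⊆ ⋃ i, h i '' V → (interior Δ).Nonempty) := by
  have hΔclosed : IsClosed Δ := hΔc.isClosed
  have key : ∀ K : Set X, IsCompact K → K ⊆ ⋃ i, h i '' K → K ⊆ Δ := by
    intro K hK hKsub
    rcases K.eq_empty_or_nonempty with rfl | hKne
    · exact empty_subset Δ
    -- contraction estimate
    have step : ∀ (i : Fin k) (y : X), Metric.infDist (h i y) Δ ≤ ξ i * Metric.infDist y Δ := by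
      intro i y
      obtain ⟨z, hz, hdz⟩ := hΔc.exists_infDist_eq_dist hΔne y
      have hmem : h i z ∈ Δ := by
        rw [hΔfix]; exact mem_iUnion.2 ⟨i, mem_image_of_mem _ hz⟩
      calc Metric.infDist (h i y) Δ ≤ dist (h i y) (h i z) := Metric.infDist_le_dist_of_mem hmem
        _ ≤ ξ i * dist y z := (hlip i).dist_le_mul y z
        _ = ξ i * Metric.infDist y Δ := by rw [← hdz]
    -- max of infDist over K
    have hcont : ContinuousOn (fun x => Metric.infDist x Δ) K :=
      (Metric.continuous_infDist_pt Δ).continuousOn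
    obtain ⟨x0, hx0K, hx0max⟩ := hK.exists_isMaxOn hKne hcont
    have hx0zero : Metric.infDist x0 Δ ≤ 0 := by
      rcases mem_iUnion.1 (hKsub hx0K) with ⟨i, hi⟩
      rcases hi with ⟨y, hyK, hyx⟩
      have h1 : Metric.infDist x0 Δ ≤ ξ i * Metric.infDist y Δ := hyx ▸ step i y
      have h2 : Metric.infDist y Δ ≤ Metric.infDist x0 Δ := hx0max hyK
      have h3 : Metric.infDist x0 Δ ≤ ξ i * Metric.infDist x0 Δ :=
        h1.trans (mul_le_mul_of_nonneg_left h2 (ξ i).coe_nonneg)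
      nlinarith [Metric.infDist_nonneg (x := x0) (s := Δ), (hξ i), NNReal.coe_lt_one.2 (hξ i)]
    intro x hxK
    have : Metric.infDist x Δ ≤ 0 := (hx0max hxK).trans hx0zero
    have hx : Metric.infDist x Δ = 0 :=
      le_antisymm this Metric.infDist_nonneg
    rwa [← hΔclosed.closure_eq, Metric.mem_closure_iff_infDist_zero hΔne]
  refine ⟨key, fun V hVopen hVne hVc hVsub => ?_⟩
  have hsub : closure V ⊆ ⋃ i, h i '' closure V :=
    hVsub.trans (iUnion_mono fun i => image_mono subset_closure)
  have hVΔ : V ⊆ Δ := subset_closure.trans (key (closure V) hVc hsub)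
  obtain ⟨x, hx⟩ := hVne
  exact ⟨x, interior_maximal hVΔ hVopen hx⟩
end

section
/- There exist k ∈ ℕ and contracting similarities h_1, …, h_k of the plane ℝ², each of the form h_i(x) = κ_i A_i x + b_i with κ_i ∈ (0,1), A_i a rotation matrix, and b_i ∈ ℝ², such that the linear part κ_i A_i of each h_i has no real eigenvalues, and such that the Hutchinson attractor Δ of the family (the unique nonempty compact set with Δ = h_1(Δ) ∪ … ∪ h_k(Δ)) has nonempty interior. -/
open Set Matrix EMetric Metric

noncomputable def R2 : Matrix (Fin 2) (Fin 2) ℝ := !![0, -1; 1, 0]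
noncomputable def bb (i : Fin 4) : Fin 2 → ℝ :=
  ![if i.val < 2 then 1/2 else -1/2, if i.val % 2 = 0 then 1/2 else -1/2]

lemma c0 : ((0 : Fin 4) : ℕ) = 0 := rfl
lemma c1 : ((1 : Fin 4) : ℕ) = 1 := rfl
lemma c2 : ((2 : Fin 4) : ℕ) = 2 := rfl
lemma c3 : ((3 : Fin 4) : ℕ) = 3 := rfl

noncomputable def hmap (i : Fin 4) (x : Fin 2 → ℝ) : Fin 2 → ℝ := (1/2 : ℝ) • R2.mulVec x + bb i

lemma hmap_apply0 (i : Fin 4) (x : Fin 2 → ℝ) : hmap i x 0 = -(1/2) * x 1 + bb i 0 := by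
  simp [hmap, R2, Matrix.mulVec, dotProduct, Fin.sum_univ_two]

lemma hmap_apply1 (i : Fin 4) (x : Fin 2 → ℝ) : hmap i x 1 = (1/2) * x 0 + bb i 1 := by
  simp [hmap, R2, Matrix.mulVec, dotProduct, Fin.sum_univ_two]

def Δ₀ : Set (Fin 2 → ℝ) := Icc (fun _ => -1) (fun _ => 1)

lemma mem_Δ₀ {x : Fin 2 → ℝ} :
    x ∈ Δ₀ ↔ (-1 ≤ x 0 ∧ x 0 ≤ 1) ∧ (-1 ≤ x 1 ∧ x 1 ≤ 1) := by
  simp only [Δ₀, Set.mem_Icc, Pi.le_def, Fin.forall_fin_two]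
  tauto


lemma funext2 {f g : Fin 2 → ℝ} (h0 : f 0 = g 0) (h1 : f 1 = g 1) : f = g := by
  funext j
  revert j
  rw [Fin.forall_fin_two]
  exact ⟨h0, h1⟩

lemma hmap_preim (i : Fin 4) (y : Fin 2 → ℝ) :
    hmap i ![2 * (y 1 - bb i 1), 2 * (bb i 0 - y 0)] = y := by
  apply funext2
  · rw [hmap_apply0]; show -(1/2) * (2 * (bb i 0 - y 0)) + bb i 0 = y 0; ring
  · rw [hmap_apply1]; show 1/2 * (2 * (y 1 - bb i 1)) + bb i 1 = y 1; ring

lemma selfSimilar : Δ₀ = ⋃ i, hmap i '' Δ₀ := by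
  ext y
  constructor
  · intro hy
    obtain ⟨⟨h00, h01⟩, h10, h11⟩ := mem_Δ₀.1 hy
    have key : ∀ i : Fin 4, |y 0 - bb i 0| ≤ 1/2 → |y 1 - bb i 1| ≤ 1/2 →
        y ∈ ⋃ i, hmap i '' Δ₀ := by
      intro i hi0 hi1
      rw [abs_le] at hi0 hi1
      refine mem_iUnion.2 ⟨i, ![2 * (y 1 - bb i 1), 2 * (bb i 0 - y 0)], ?_, hmap_preim i y⟩
      have e0 : (![2 * (y 1 - bb i 1), 2 * (bb i 0 - y 0)] : Fin 2 → ℝ) 0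
          = 2 * (y 1 - bb i 1) := rfl
      have e1 : (![2 * (y 1 - bb i 1), 2 * (bb i 0 - y 0)] : Fin 2 → ℝ) 1
          = 2 * (bb i 0 - y 0) := rfl
      rw [mem_Δ₀, e0, e1]
      exact ⟨⟨by linarith [hi1.1, hi1.2], by linarith [hi1.1, hi1.2]⟩,
             by linarith [hi0.1, hi0.2], by linarith [hi0.1, hi0.2]⟩
    rcases le_total 0 (y 0) with hs0 | hs0 <;> rcases le_total 0 (y 1) with hs1 | hs1
    · exact key 0 (by rw [abs_le]; norm_num [bb, c0, c1, c2, c3]; constructor <;> linarith)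
        (by rw [abs_le]; norm_num [bb, c0, c1, c2, c3]; constructor <;> linarith)
    · exact key 1 (by rw [abs_le]; norm_num [bb, c0, c1, c2, c3]; constructor <;> linarith)
        (by rw [abs_le]; norm_num [bb, c0, c1, c2, c3]; constructor <;> linarith)
    · exact key 2 (by rw [abs_le]; norm_num [bb, c0, c1, c2, c3]; constructor <;> linarith)
        (by rw [abs_le]; norm_num [bb, c0, c1, c2, c3]; constructor <;> linarith)
    · exact key 3 (by rw [abs_le]; norm_num [bb, c0, c1, c2, c3]; constructor <;> linarith)
        (by rw [abs_le]; norm_num [bb, c0, c1, c2, c3]; constructor <;> linarith)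
  · intro hy
    obtain ⟨i, a, ha, rfl⟩ := mem_iUnion.1 hy
    obtain ⟨⟨h00, h01⟩, h10, h11⟩ := mem_Δ₀.1 ha
    rw [mem_Δ₀, hmap_apply0, hmap_apply1]
    fin_cases i <;> norm_num [bb, c0, c1, c2, c3] <;>
      exact ⟨⟨by linarith, by linarith⟩, by linarith, by linarith⟩

lemma hmap_lip (i : Fin 4) : LipschitzWith (1/2 : NNReal) (hmap i) := by
  apply LipschitzWith.of_dist_le_mul
  intro x y
  have hc : ((1/2 : NNReal) : ℝ) = 1/2 := by norm_num
  rw [hc, dist_pi_le_iff (by positivity), Fin.forall_fin_two]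
  constructor
  · rw [hmap_apply0, hmap_apply0, Real.dist_eq]
    have h := dist_le_pi_dist x y 1
    rw [Real.dist_eq] at h
    have e : (-(1/2) * x 1 + bb i 0) - (-(1/2) * y 1 + bb i 0) = -(1/2) * (x 1 - y 1) := by
      ring
    rw [e, abs_mul]
    have : |(-(1/2) : ℝ)| = 1/2 := by norm_num
    rw [this]
    linarith [abs_nonneg (x 1 - y 1)]
  · rw [hmap_apply1, hmap_apply1, Real.dist_eq]
    have h := dist_le_pi_dist x y 0
    rw [Real.dist_eq] at h
    have e : (1/2 * x 0 + bb i 1) - (1/2 * y 0 + bb i 1) = (1/2) * (x 0 - y 0) := by ring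
    rw [e, abs_mul]
    have : |((1/2) : ℝ)| = 1/2 := by norm_num
    rw [this]
    linarith [abs_nonneg (x 0 - y 0)]

lemma attractor_unique {S T : Set (Fin 2 → ℝ)} (hSne : S.Nonempty) (hSc : IsCompact S)
    (hS : S = ⋃ i, hmap i '' S) (hTne : T.Nonempty) (hTc : IsCompact T)
    (hT : T = ⋃ i, hmap i '' T) : S = T := by
  have hfin : hausdorffEdist S T ≠ ⊤ :=
    hausdorffEdist_ne_top_of_nonempty_of_bounded hSne hTne hSc.isBounded hTc.isBounded
  have main : ∀ (U V : Set (Fin 2 → ℝ)), V.Nonempty → IsCompact V →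
      ∀ x ∈ ⋃ i, hmap i '' U, infEdist x (⋃ i, hmap i '' V) ≤ 2⁻¹ * hausdorffEdist U V := by
    intro U V hVne hVc x hx
    obtain ⟨i, a, haU, rfl⟩ := mem_iUnion.1 hx
    obtain ⟨y, hyV, hy⟩ := hVc.exists_infEdist_eq_edist hVne a
    have h1 : edist a y ≤ hausdorffEdist U V := by
      rw [← hy]; exact infEdist_le_hausdorffEdist_of_mem haU
    calc infEdist (hmap i a) (⋃ j, hmap j '' V)
        ≤ edist (hmap i a) (hmap i y) :=
          infEdist_le_edist_of_mem (mem_iUnion.2 ⟨i, mem_image_of_mem _ hyV⟩)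
      _ ≤ (1/2 : NNReal) * edist a y := (hmap_lip i).edist_le_mul a y
      _ ≤ 2⁻¹ * hausdorffEdist U V := by
          rw [show ((1/2 : NNReal) : ENNReal) = 2⁻¹ by
            rw [one_div, ENNReal.coe_inv (by norm_num)]; norm_num]
          gcongr
  have key : hausdorffEdist S T ≤ 2⁻¹ * hausdorffEdist S T := by
    conv_lhs => rw [hS, hT]
    refine hausdorffEdist_le_of_infEdist (main S T hTne hTc) ?_
    intro x hx
    rw [hausdorffEdist, hausdorffEDist_comm]
    exact main T S hSne hSc x hx
  have h0 : hausdorffEdist S T = 0 := by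
    by_contra h
    have hlt : hausdorffEdist S T / 2 < hausdorffEdist S T := ENNReal.half_lt_self h hfin
    have e : 2⁻¹ * hausdorffEdist S T = hausdorffEdist S T / 2 := by
      rw [div_eq_mul_inv, mul_comm]
    rw [e] at key
    exact absurd key (not_le.2 hlt)
  exact (hausdorffEdist_zero_iff_eq_of_closed hSc.isClosed hTc.isClosed).1 h0

lemma R2_orth : R2 ∈ Matrix.orthogonalGroup (Fin 2) ℝ := by
  rw [Matrix.mem_orthogonalGroup_iff]
  have hstar : R2ᵀ = !![0, 1; -1, 0] := by
    ext i j; fin_cases i <;> fin_cases j <;> rfl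
  rw [hstar, show R2 = !![0, -1; 1, 0] from rfl, Matrix.mul_fin_two, Matrix.one_fin_two]
  norm_num

lemma R2_det : R2.det = 1 := by
  rw [show R2 = !![0, -1; 1, 0] from rfl, Matrix.det_fin_two_of]
  norm_num

lemma no_eigen : ¬ ∃ (c : ℝ) (v : Fin 2 → ℝ), v ≠ 0 ∧ ((1/2 : ℝ) • R2).mulVec v = c • v := by
  rintro ⟨c, v, hv, hmv⟩
  have h0 := congrFun hmv 0
  have h1 := congrFun hmv 1
  simp [R2, Matrix.mulVec, dotProduct, Fin.sum_univ_two] at h0 h1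
  have hsum : (1/2) * ((v 0)^2 + (v 1)^2) = 0 := by
    linear_combination (v 0) * h1 - (v 1) * h0
  have hv0 : v 0 = 0 := by nlinarith [sq_nonneg (v 0), sq_nonneg (v 1)]
  have hv1 : v 1 = 0 := by nlinarith [sq_nonneg (v 0), sq_nonneg (v 1)]
  exact hv (funext2 hv0 hv1)

lemma Δ₀_nonempty : Δ₀.Nonempty := ⟨0, mem_Δ₀.2 (by norm_num)⟩

lemma Δ₀_compact : IsCompact Δ₀ := isCompact_Icc

lemma Δ₀_interior : (interior Δ₀).Nonempty := by
  refine ⟨0, mem_interior.2 ⟨Metric.ball 0 1, ?_, Metric.isOpen_ball, Metric.mem_ball_self one_pos⟩⟩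
  intro x hx
  rw [mem_ball_zero_iff] at hx
  have h0 := norm_le_pi_norm x 0
  have h1 := norm_le_pi_norm x 1
  rw [Real.norm_eq_abs, abs_le] at h0 h1
  exact mem_Δ₀.2 ⟨⟨by linarith [h0.1], by linarith [h0.2]⟩, by linarith [h1.1], by linarith [h1.2]⟩


/-- there exist finitely many contracting similarities
`h i (x) = κ i • (A i).mulVec x + b i` of the plane (with `κ i ∈ (0,1)` and `A i` a rotation
matrix, so that the linear part `κ i • A i` has no real eigenvalues) whose Hutchinson
attractor — the unique nonempty compact set `Δ` with `Δ = ⋃ i, h i '' Δ` — has nonempty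
interior. -/
theorem stmt_10 :
    ∃ (k : ℕ), 0 < k ∧ ∃ (κ : Fin k → ℝ) (A : Fin k → Matrix (Fin 2) (Fin 2) ℝ)
      (b : Fin k → (Fin 2 → ℝ)),
      (∀ i, κ i ∈ Ioo (0 : ℝ) 1) ∧
      (∀ i, A i ∈ Matrix.orthogonalGroup (Fin 2) ℝ ∧ (A i).det = 1) ∧
      (∀ i, ¬ ∃ (c : ℝ) (v : Fin 2 → ℝ), v ≠ 0 ∧ (κ i • A i).mulVec v = c • v) ∧
      ∃ Δ : Set (Fin 2 → ℝ),
        (Δ.Nonempty ∧ IsCompact Δ ∧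
          Δ = ⋃ i, (fun x => κ i • (A i).mulVec x + b i) '' Δ) ∧
        (∀ Δ' : Set (Fin 2 → ℝ), Δ'.Nonempty → IsCompact Δ' →
          Δ' = ⋃ i, (fun x => κ i • (A i).mulVec x + b i) '' Δ' → Δ' = Δ) ∧
        (interior Δ).Nonempty := by
  refine ⟨4, by norm_num, fun _ => 1/2, fun _ => R2, bb,
    fun i => ⟨by norm_num, by norm_num⟩, fun i => ⟨R2_orth, R2_det⟩,
    fun i => no_eigen, Δ₀, ⟨Δ₀_nonempty, Δ₀_compact, selfSimilar⟩, ?_, Δ₀_interior⟩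
  intro Δ' hne hc heq
  exact attractor_unique hne hc heq Δ₀_nonempty Δ₀_compact selfSimilar
end

section
/- Exclusion of Lebesgue density points on the attractor: let h_1, …, h_k : ℝ² → ℝ² be contracting similarities (h_i(x) = κ_i A_i x + b_i with κ_i ∈ (0,1) and A_i orthogonal), let U be an open ball with h_i(U) ⊆ U for every i, and let Δ ⊆ closure(U) be the Hutchinson attractor of the family. Let B ⊆ ℝ² be Lebesgue measurable with h_i(B) = B for every i. If vol(U \ B) > 0, then no point p ∈ Δ is a Lebesgue density point of B; in fact there is a constant c > 0 (depending only on min_i κ_i and vol(U \ B)/vol(U)) such that vol(B(p,δ) \ B) ≥ c · vol(B(p,δ)) for every p ∈ Δ and every sufficiently small δ > 0. -/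
open Set MeasureTheory Filter

noncomputable section
open Matrix

local notation "E2" => EuclideanSpace ℝ (Fin 2)



lemma stmt11_teLin_mul (M N : Matrix (Fin 2) (Fin 2) ℝ) (v : E2) :
    Matrix.toEuclideanLin (M * N) v = Matrix.toEuclideanLin M (Matrix.toEuclideanLin N v) := by
  simp [Matrix.toEuclideanLin_apply, Matrix.mulVec_mulVec]

lemma stmt11_teLin_one (v : E2) : Matrix.toEuclideanLin (1 : Matrix (Fin 2) (Fin 2) ℝ) v = v := by
  simp [Matrix.toEuclideanLin_apply]

lemma stmt11_ortho_norm {A : Matrix (Fin 2) (Fin 2) ℝ}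
    (hA : A ∈ Matrix.orthogonalGroup (Fin 2) ℝ) (v : E2) :
    ‖Matrix.toEuclideanLin A v‖ = ‖v‖ := by
  have h1 : star A * A = 1 := hA.1
  have key : (inner ℝ (Matrix.toEuclideanLin A v) (Matrix.toEuclideanLin A v) : ℝ)
      = inner ℝ v v := by
    rw [← LinearMap.adjoint_inner_left, ← Matrix.toEuclideanLin_conjTranspose_eq_adjoint,
      ← Matrix.star_eq_conjTranspose, ← stmt11_teLin_mul, h1, stmt11_teLin_one]
  have := real_inner_self_eq_norm_sq (Matrix.toEuclideanLin A v)
  have h2 := real_inner_self_eq_norm_sq v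
  nlinarith [norm_nonneg (Matrix.toEuclideanLin A v), norm_nonneg v]

lemma stmt11_ortho_det {A : Matrix (Fin 2) (Fin 2) ℝ}
    (hA : A ∈ Matrix.orthogonalGroup (Fin 2) ℝ) :
    |LinearMap.det (Matrix.toEuclideanLin A : E2 →ₗ[ℝ] E2)| = 1 := by
  have h1 : star A * A = 1 := hA.1
  have hd : A.det * A.det = 1 := by
    have := congrArg Matrix.det h1
    rwa [Matrix.det_mul, Matrix.star_eq_conjTranspose, Matrix.det_conjTranspose, star_trivial,
      Matrix.det_one] at this
  have hdet : LinearMap.det (Matrix.toEuclideanLin A : E2 →ₗ[ℝ] E2) = A.det := by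
    rw [Matrix.toEuclideanLin_eq_toLin, LinearMap.det_toLin]
  rw [hdet]
  rcases mul_self_eq_one_iff.1 hd with h | h <;> simp [h]


variable {κ : ℝ} {A : Matrix (Fin 2) (Fin 2) ℝ} {b : E2} {h : E2 → E2}

lemma stmt11_dist (hκ : 0 < κ)
    (hA : A ∈ Matrix.orthogonalGroup (Fin 2) ℝ)
    (hdef : ∀ x, h x = κ • Matrix.toEuclideanLin A x + b) (x y : E2) :
    dist (h x) (h y) = κ * dist x y := by
  rw [dist_eq_norm, dist_eq_norm, hdef, hdef]
  have : κ • (Matrix.toEuclideanLin A) x + b - (κ • (Matrix.toEuclideanLin A) y + b)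
      = κ • (Matrix.toEuclideanLin A) (x - y) := by
    rw [map_sub]; module
  rw [this, norm_smul, stmt11_ortho_norm hA, Real.norm_eq_abs, abs_of_pos hκ]

lemma stmt11_rinv (hκ : 0 < κ)
    (hA : A ∈ Matrix.orthogonalGroup (Fin 2) ℝ)
    (hdef : ∀ x, h x = κ • Matrix.toEuclideanLin A x + b) (y : E2) :
    h (Matrix.toEuclideanLin (star A) (κ⁻¹ • (y - b))) = y := by
  rw [hdef, _root_.map_smul, _root_.map_smul, smul_smul, mul_inv_cancel₀ hκ.ne', one_smul,
    ← stmt11_teLin_mul, hA.2, stmt11_teLin_one, sub_add_cancel]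

lemma stmt11_ball (hκ : 0 < κ)
    (hA : A ∈ Matrix.orthogonalGroup (Fin 2) ℝ)
    (hdef : ∀ x, h x = κ • Matrix.toEuclideanLin A x + b) (x : E2) (ρ : ℝ) :
    h '' Metric.ball x ρ = Metric.ball (h x) (κ * ρ) := by
  ext y
  constructor
  · rintro ⟨z, hz, rfl⟩
    rw [Metric.mem_ball] at hz ⊢
    rw [stmt11_dist hκ hA hdef]
    exact mul_lt_mul_of_pos_left hz hκ
  · intro hy
    rw [Metric.mem_ball] at hy
    refine ⟨Matrix.toEuclideanLin (star A) (κ⁻¹ • (y - b)), ?_, stmt11_rinv hκ hA hdef y⟩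
    rw [Metric.mem_ball]
    have := stmt11_dist hκ hA hdef (Matrix.toEuclideanLin (star A) (κ⁻¹ • (y - b))) x
    rw [stmt11_rinv hκ hA hdef y] at this
    calc dist (Matrix.toEuclideanLin (star A) (κ⁻¹ • (y - b))) x
        = κ⁻¹ * dist y (h x) := by
          field_simp at this ⊢; linarith [this]
      _ < κ⁻¹ * (κ * ρ) := by
          apply mul_lt_mul_of_pos_left hy (by positivity)
      _ = ρ := by field_simp

lemma stmt11_vol (hκ : 0 < κ)
    (hA : A ∈ Matrix.orthogonalGroup (Fin 2) ℝ)
    (hdef : ∀ x, h x = κ • Matrix.toEuclideanLin A x + b) (s : Set E2) :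
    volume (h '' s) = ENNReal.ofReal (κ ^ 2) * volume s := by
  have himg : h '' s = (fun z => z + b) '' ((κ • (Matrix.toEuclideanLin A : E2 →ₗ[ℝ] E2) :
      E2 →ₗ[ℝ] E2) '' s) := by
    rw [← Set.image_comp]
    apply Set.image_congr
    intro x _
    simp [hdef, Function.comp]
  rw [himg, Set.image_add_right, measure_preimage_add_right,
    MeasureTheory.Measure.addHaar_image_linearMap]
  congr 1
  rw [LinearMap.det_smul, finrank_euclideanSpace_fin, abs_mul, abs_pow,
    stmt11_ortho_det hA, mul_one, abs_of_pos hκ]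


inductive stmt11_Iter {k : ℕ} (h : Fin k → E2 → E2) (κ : Fin k → ℝ) :
    (E2 → E2) → ℝ → Prop where
  | base : stmt11_Iter h κ id 1
  | step (i : Fin k) {f : E2 → E2} {r : ℝ} :
      stmt11_Iter h κ f r → stmt11_Iter h κ (f ∘ h i) (r * κ i)

lemma stmt11_Iter_props {k : ℕ} {h : Fin k → E2 → E2} {κ : Fin k → ℝ} {B : Set E2}
    (hκ : ∀ i, 0 < κ i)
    (Hd : ∀ i x y, dist (h i x) (h i y) = κ i * dist x y)
    (Hb : ∀ i x ρ, h i '' Metric.ball x ρ = Metric.ball (h i x) (κ i * ρ))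
    (Hv : ∀ i s, volume (h i '' s) = ENNReal.ofReal (κ i ^ 2) * volume s)
    (HB : ∀ i, h i '' B = B) :
    ∀ {f r}, stmt11_Iter h κ f r →
      0 < r ∧ (∀ x y, dist (f x) (f y) = r * dist x y) ∧
      (∀ x ρ, f '' Metric.ball x ρ = Metric.ball (f x) (r * ρ)) ∧
      (∀ s, volume (f '' s) = ENNReal.ofReal (r ^ 2) * volume s) ∧
      f '' B = B := by
  intro f r hf
  induction hf with
  | base => simp
  | step i hf ih =>
    obtain ⟨hr, ihd, ihb, ihv, ihB⟩ := ih
    refine ⟨mul_pos hr (hκ i), ?_, ?_, ?_, ?_⟩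
    · intro x y
      simp only [Function.comp]
      rw [ihd, Hd, mul_assoc]
    · intro x ρ
      rw [Set.image_comp, Hb, ihb, mul_assoc]; rfl
    · intro s
      rw [Set.image_comp, ihv, Hv, ← mul_assoc, ← ENNReal.ofReal_mul (by positivity)]
      congr 2
      ring
    · rw [Set.image_comp, HB, ihB]


/-- exclusion of Lebesgue density points on the attractor.  Let
`h i x = κ i • (A i) x + b i` be contracting similarities of the Euclidean plane
(`κ i ∈ (0,1)`, `A i` orthogonal), let `U` be an open ball with `h i '' U ⊆ U`, and let
`Δ ⊆ closure U` be the Hutchinson attractor.  If `B` is measurable with `h i '' B = B` for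
all `i` and `vol (U \ B) > 0`, then no `p ∈ Δ` is a Lebesgue density point of `B`; in fact
there is `c > 0` with `vol (ball p δ \ B) ≥ c ⬝ vol (ball p δ)` for all `p ∈ Δ` and all
sufficiently small `δ > 0`. -/
theorem stmt_11 {k : ℕ}
    (κ : Fin k → ℝ) (hκ : ∀ i, κ i ∈ Ioo (0 : ℝ) 1)
    (A : Fin k → Matrix (Fin 2) (Fin 2) ℝ)
    (hA : ∀ i, A i ∈ Matrix.orthogonalGroup (Fin 2) ℝ)
    (b : Fin k → EuclideanSpace ℝ (Fin 2))
    (h : Fin k → EuclideanSpace ℝ (Fin 2) → EuclideanSpace ℝ (Fin 2))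
    (hdef : ∀ i x, h i x = κ i • (Matrix.toEuclideanLin (A i)) x + b i)
    (c₀ : EuclideanSpace ℝ (Fin 2)) (R : ℝ) (hR : 0 < R)
    (U : Set (EuclideanSpace ℝ (Fin 2))) (hU : U = Metric.ball c₀ R)
    (hinv : ∀ i, h i '' U ⊆ U)
    (Δ : Set (EuclideanSpace ℝ (Fin 2))) (hΔne : Δ.Nonempty) (hΔc : IsCompact Δ)
    (hΔfix : Δ = ⋃ i, h i '' Δ) (hΔU : Δ ⊆ closure U)
    (B : Set (EuclideanSpace ℝ (Fin 2))) (hB : MeasurableSet B)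
    (hBinv : ∀ i, h i '' B = B)
    (hpos : 0 < volume (U \ B)) :
    (∀ p ∈ Δ, ¬ Tendsto
        (fun δ : ℝ => volume (B ∩ Metric.ball p δ) / volume (Metric.ball p δ))
        (nhdsWithin 0 (Ioi 0)) (nhds 1)) ∧
    ∃ c : ℝ, 0 < c ∧ ∃ δ₀ : ℝ, 0 < δ₀ ∧ ∀ p ∈ Δ, ∀ δ : ℝ, 0 < δ → δ < δ₀ →
      ENNReal.ofReal c * volume (Metric.ball p δ) ≤ volume (Metric.ball p δ \ B) := by
  classical
  -- k is positive
  have hk : 0 < k := by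
    rcases Nat.eq_zero_or_pos k with hk0 | hk0
    · exfalso
      subst hk0
      rw [iUnion_of_empty] at hΔfix
      exact hΔne.ne_empty hΔfix
    · exact hk0
  haveI : Nonempty (Fin k) := ⟨⟨0, hk⟩⟩
  set κ1 : ℝ := Finset.univ.inf' Finset.univ_nonempty κ with hκ1def
  set κ2 : ℝ := Finset.univ.sup' Finset.univ_nonempty κ with hκ2def
  have hκ1pos : 0 < κ1 := by
    rw [hκ1def, Finset.lt_inf'_iff]
    exact fun i _ => (hκ i).1
  have hκ1le : ∀ i, κ1 ≤ κ i := fun i => Finset.inf'_le κ (Finset.mem_univ i)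
  have hκ2lt : κ2 < 1 := by
    rw [hκ2def, Finset.sup'_lt_iff]
    exact fun i _ => (hκ i).2
  have hκ2le : ∀ i, κ i ≤ κ2 := fun i => Finset.le_sup' κ (Finset.mem_univ i)
  have hκ2pos : 0 < κ2 := lt_of_lt_of_le (hκ Classical.ofNonempty).1 (hκ2le _)
  have hκ1lt : κ1 < 1 := lt_of_le_of_lt (le_trans (hκ1le Classical.ofNonempty) (hκ2le Classical.ofNonempty)) hκ2lt
  -- basic per-map facts
  have Hd := fun i => stmt11_dist (hκ i).1 (hA i) (hdef i)
  have Hb := fun i => stmt11_ball (hκ i).1 (hA i) (hdef i)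
  have Hv := fun i => stmt11_vol (hκ i).1 (hA i) (hdef i)
  have props := fun {f r} (hf : stmt11_Iter h κ f r) =>
    stmt11_Iter_props (fun i => (hκ i).1) Hd Hb Hv hBinv hf
  -- descent
  have descent : ∀ (p : EuclideanSpace ℝ (Fin 2)) (t : ℝ), 0 < t → ∀ (n : ℕ)
      (f : EuclideanSpace ℝ (Fin 2) → EuclideanSpace ℝ (Fin 2)) (r : ℝ),
      stmt11_Iter h κ f r → p ∈ f '' Δ → t < r * R → r * R ≤ t / κ2 ^ n →
      ∃ f' r', stmt11_Iter h κ f' r' ∧ p ∈ f' '' Δ ∧ κ1 * t < r' * R ∧ r' * R ≤ t := by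
    intro p t ht n
    induction n with
    | zero =>
      intro f r _ _ hlt hle
      simp only [pow_zero, div_one] at hle
      exact absurd hle (not_le.2 hlt)
    | succ n ih =>
      intro f r hf hp hlt hle
      have hp' : p ∈ f '' (⋃ i, h i '' Δ) := by rw [← hΔfix]; exact hp
      rw [Set.image_iUnion] at hp'
      obtain ⟨i, hpi⟩ := Set.mem_iUnion.1 hp'
      rw [← Set.image_comp] at hpi
      have hstep := stmt11_Iter.step i hf
      rcases le_or_gt (r * κ i * R) t with hcase | hcase
      · refine ⟨f ∘ h i, r * κ i, hstep, hpi, ?_, hcase⟩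
        calc κ1 * t < κ1 * (r * R) := by
              exact mul_lt_mul_of_pos_left hlt hκ1pos
          _ ≤ κ i * (r * R) := by
              apply mul_le_mul_of_nonneg_right (hκ1le i)
              nlinarith
          _ = r * κ i * R := by ring
      · refine ih (f ∘ h i) (r * κ i) hstep hpi hcase ?_
        have h1 : r * κ i * R ≤ κ2 * (r * R) := by
          have := hκ2le i
          have hrR : 0 < r * R := lt_trans ht hlt
          nlinarith [(props hf).1]
        calc r * κ i * R ≤ κ2 * (r * R) := h1
          _ ≤ κ2 * (t / κ2 ^ (n + 1)) := by
              exact mul_le_mul_of_nonneg_left hle hκ2pos.le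
          _ = t / κ2 ^ n := by
              field_simp
              ring
  -- existence of a good ball
  have exists_ball : ∀ p ∈ Δ, ∀ t : ℝ, 0 < t → t ≤ R →
      ∃ f r, stmt11_Iter h κ f r ∧ p ∈ f '' Δ ∧ κ1 * t < r * R ∧ r * R ≤ t := by
    intro p hp t ht htR
    rcases le_or_gt R t with hRt | hRt
    · refine ⟨id, 1, stmt11_Iter.base, ⟨p, hp, rfl⟩, ?_, by linarith⟩
      calc κ1 * t < 1 * t := by
            exact mul_lt_mul_of_pos_right hκ1lt ht
        _ = t := one_mul t
        _ ≤ R := htR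
        _ = 1 * R := (one_mul R).symm
    · obtain ⟨n, hn⟩ := exists_pow_lt_of_lt_one (by positivity : (0:ℝ) < t / R) hκ2lt
      refine descent p t ht n id 1 stmt11_Iter.base ⟨p, hp, rfl⟩ (by linarith) ?_
      rw [one_mul, le_div_iff₀ (pow_pos hκ2pos n)]
      have := (lt_div_iff₀ hR).1 hn
      nlinarith
  -- constants
  have hUfin : volume U ≠ ⊤ := by rw [hU]; exact measure_ball_lt_top.ne
  set m := volume (U \ B) with hm
  have hmfin : m ≠ ⊤ := ne_top_of_le_ne_top hUfin (measure_mono diff_subset)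
  set v1 := volume (Metric.ball (0 : EuclideanSpace ℝ (Fin 2)) 1) with hv1
  have hv1pos : 0 < v1 := Metric.measure_ball_pos volume _ one_pos
  have hv1fin : v1 ≠ ⊤ := measure_ball_lt_top.ne
  set M := m.toReal with hM'
  set V := v1.toReal with hV'
  have hM : 0 < M := ENNReal.toReal_pos hpos.ne' hmfin
  have hV : 0 < V := ENNReal.toReal_pos hv1pos.ne' hv1fin
  set c := min ((κ1 / (3*R))^2 * (M/V)) (1/2) with hc
  have hcpos : 0 < c := lt_min (by positivity) one_half_pos
  have hc2 : c ≤ 1/2 := min_le_right _ _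
  -- key quantitative estimate
  have key : ∀ p ∈ Δ, ∀ δ : ℝ, 0 < δ → δ < R →
      ENNReal.ofReal c * volume (Metric.ball p δ) ≤ volume (Metric.ball p δ \ B) := by
    intro p hp δ hδ hδR
    obtain ⟨f, r, hf, hpf, hlow, hhigh⟩ := exists_ball p hp (δ/3) (by positivity) (by linarith)
    obtain ⟨hr, hfd, hfb, hfv, hfB⟩ := props hf
    set q := f c₀ with hq
    set s := r * R with hs
    have hballU : f '' U = Metric.ball q s := by rw [hU]; exact hfb c₀ R
    have hfc : Continuous f := by
      have hl : LipschitzWith (Real.toNNReal r) f := by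
        apply LipschitzWith.of_dist_le_mul
        intro x y
        rw [hfd x y, Real.coe_toNNReal r hr.le]
      exact hl.continuous
    have hpcl : p ∈ closure (Metric.ball q s) := by
      rw [← hballU]
      exact (image_closure_subset_closure_image hfc) (Set.image_mono hΔU hpf)
    have hqps : dist p q ≤ s :=
      Metric.mem_closedBall.1 (Metric.closure_ball_subset_closedBall hpcl)
    have hsle : s ≤ δ/3 := hhigh
    have hsub : Metric.ball q s ⊆ Metric.ball p δ := by
      intro y hy
      rw [Metric.mem_ball] at hy ⊢
      calc dist y p ≤ dist y q + dist q p := dist_triangle y q p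
        _ < s + s := add_lt_add_of_lt_of_le hy (by rw [dist_comm]; exact hqps)
        _ ≤ δ/3 + δ/3 := by linarith
        _ < δ := by linarith
    have hfinj : Function.Injective f := by
      intro x y hxy
      have hd0 := hfd x y
      rw [hxy, dist_self] at hd0
      have : dist x y = 0 := by
        rcases mul_eq_zero.1 hd0.symm with h' | h'
        · exact absurd h' hr.ne'
        · exact h'
      exact dist_eq_zero.1 this
    have hvol1 : volume (Metric.ball q s \ B) = ENNReal.ofReal (r^2) * m := by
      rw [← hballU, ← hfB, ← Set.image_diff hfinj, hfv]
    have hmono : volume (Metric.ball q s \ B) ≤ volume (Metric.ball p δ \ B) :=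
      measure_mono (diff_subset_diff_left hsub)
    have hballvol : volume (Metric.ball p δ) = ENNReal.ofReal (δ^2) * v1 := by
      rw [Measure.addHaar_ball volume p hδ.le, finrank_euclideanSpace_fin]
    have hrlow : κ1 * (δ/3) / R < r := (div_lt_iff₀ hR).2 hlow
    have hreal : c * δ^2 * V ≤ r^2 * M := by
      have h1 : c ≤ (κ1/(3*R))^2 * (M/V) := min_le_left _ _
      have h2 : (κ1*(δ/3)/R)^2 ≤ r^2 := by
        apply pow_le_pow_left₀ (by positivity) hrlow.le
      have e1 : (κ1/(3*R))^2 * (M/V) * δ^2 * V = (κ1*(δ/3)/R)^2 * M := by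
        field_simp
      calc c * δ^2 * V ≤ (κ1/(3*R))^2 * (M/V) * δ^2 * V := by
            apply mul_le_mul_of_nonneg_right
              (mul_le_mul_of_nonneg_right h1 (sq_nonneg δ)) hV.le
        _ = (κ1*(δ/3)/R)^2 * M := e1
        _ ≤ r^2 * M := mul_le_mul_of_nonneg_right h2 hM.le
    calc ENNReal.ofReal c * volume (Metric.ball p δ)
        = ENNReal.ofReal c * (ENNReal.ofReal (δ^2) * ENNReal.ofReal V) := by
          rw [hballvol, hV', ENNReal.ofReal_toReal hv1fin]
      _ = ENNReal.ofReal (c * δ^2 * V) := by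
          rw [← ENNReal.ofReal_mul (by positivity : (0:ℝ) ≤ δ^2), ← ENNReal.ofReal_mul hcpos.le,
            mul_assoc]
      _ ≤ ENNReal.ofReal (r^2 * M) := ENNReal.ofReal_le_ofReal hreal
      _ = ENNReal.ofReal (r^2) * ENNReal.ofReal M := ENNReal.ofReal_mul (by positivity)
      _ = ENNReal.ofReal (r^2) * m := by rw [hM', ENNReal.ofReal_toReal hmfin]
      _ = volume (Metric.ball q s \ B) := hvol1.symm
      _ ≤ volume (Metric.ball p δ \ B) := hmono
  refine ⟨?_, c, hcpos, R, hR, key⟩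
  -- no density point
  intro p hp hT
  have hub : ∀ δ : ℝ, 0 < δ → δ < R →
      volume (B ∩ Metric.ball p δ) / volume (Metric.ball p δ) ≤ ENNReal.ofReal (1 - c) := by
    intro δ hδ hδR
    set W := volume (Metric.ball p δ) with hW
    have hWfin : W ≠ ⊤ := measure_ball_lt_top.ne
    have hsplit : volume (Metric.ball p δ ∩ B) + volume (Metric.ball p δ \ B) = W :=
      measure_inter_add_diff _ hB
    have h1 : volume (B ∩ Metric.ball p δ) + ENNReal.ofReal c * W ≤ W := by
      rw [Set.inter_comm]
      calc volume (Metric.ball p δ ∩ B) + ENNReal.ofReal c * W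
          ≤ volume (Metric.ball p δ ∩ B) + volume (Metric.ball p δ \ B) :=
            add_le_add le_rfl (key p hp δ hδ hδR)
        _ = W := hsplit
    have h2 : W = ENNReal.ofReal (1-c) * W + ENNReal.ofReal c * W := by
      rw [← add_mul, ← ENNReal.ofReal_add (by linarith) hcpos.le]
      norm_num
    have h3 : volume (B ∩ Metric.ball p δ) ≤ ENNReal.ofReal (1-c) * W :=
      (ENNReal.add_le_add_iff_right
        (ENNReal.mul_ne_top ENNReal.ofReal_ne_top hWfin)).1 (h1.trans (le_of_eq h2))
    exact ENNReal.div_le_of_le_mul h3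
  have hlt1 : (ENNReal.ofReal (1 - c) : ENNReal) < 1 := by
    rw [← ENNReal.ofReal_one]
    exact (ENNReal.ofReal_lt_ofReal_iff one_pos).2 (by linarith)
  have hev1 : ∀ᶠ δ in nhdsWithin 0 (Ioi 0),
      volume (B ∩ Metric.ball p δ) / volume (Metric.ball p δ) ≤ ENNReal.ofReal (1-c) := by
    filter_upwards [Ioo_mem_nhdsGT_of_mem (⟨le_refl 0, hR⟩ : (0:ℝ) ∈ Ico 0 R)] with δ hδ
    exact hub δ hδ.1 hδ.2
  obtain ⟨δ, h1', h2'⟩ := (hev1.and (hT.eventually (eventually_gt_nhds hlt1))).exists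
  exact absurd h1' (not_le.2 h2')

end
end
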